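/- Let p : ℤ/n → ℝ² be a regular polygon critical for L + κ·Vol (so l_k ≡ l₀, θ_k ≡ θ₀, κ l₀ = 2 tan(θ₀/2)), and v_k = ψ_k N_k + η_k T_k with N_k = (ν_k+ν_{k-1})/(1+cos θ₀), T_k = −R N_k. Then |v_{k+1} − v_k|² − ⟨v_{k+1} − v_k, R ν_k⟩² = ((ψ_{k+1} − ψ_k) + tan(θ₀/2)(η_{k+1} + η_k))². -/

import Mathlib

open Real Finset
open scoped RealInnerProductSpace

abbrev E2 := EuclideanSpace ℝ (Fin 2)

/-- Rotation by π/2 in the plane. -/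
noncomputable def Rot (v : E2) : E2 :=
  (WithLp.equiv 2 (Fin 2 → ℝ)).symm ![-v 1, v 0]

/-- Rotation by angle θ in the plane. -/
noncomputable def RotBy (θ : ℝ) (v : E2) : E2 :=
  (WithLp.equiv 2 (Fin 2 → ℝ)).symm
    ![Real.cos θ * v 0 - Real.sin θ * v 1, Real.sin θ * v 0 + Real.cos θ * v 1]

lemma Rot_apply0 (v : E2) : Rot v 0 = -v 1 := rfl
lemma Rot_apply1 (v : E2) : Rot v 1 = v 0 := rfl
lemma RotBy_apply0 (θ : ℝ) (v : E2) :
    RotBy θ v 0 = Real.cos θ * v 0 - Real.sin θ * v 1 := rfl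
lemma RotBy_apply1 (θ : ℝ) (v : E2) :
    RotBy θ v 1 = Real.sin θ * v 0 + Real.cos θ * v 1 := rfl

lemma norm_sq_eq' (w : E2) : ‖w‖ ^ 2 = w 0 ^ 2 + w 1 ^ 2 := by
  rw [← real_inner_self_eq_norm_sq, PiLp.inner_apply, Fin.sum_univ_two]
  simp [RCLike.inner_apply]

lemma inner_eq' (w u : E2) : ⟪w, u⟫ = w 0 * u 0 + w 1 * u 1 := by
  rw [PiLp.inner_apply, Fin.sum_univ_two]
  simp [RCLike.inner_apply]
  ring

theorem secondVariation_normal_part (n : ℕ) [NeZero n]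
    (p : ZMod n → E2) (hreg : ∀ k, p (k + 1) ≠ p k)
    (ν : ZMod n → E2)
    (hν : ∀ k, ν k = Rot (‖p (k + 1) - p k‖⁻¹ • (p (k + 1) - p k)))
    (θ₀ : ℝ) (hθ₀range : θ₀ ∈ Set.Ioo (-π) π) (hθ₀ : θ₀ ≠ 0)
    (hθ : ∀ k, RotBy θ₀ (ν (k - 1)) = ν k)
    (N T : ZMod n → E2)
    (hN : ∀ k, N k = (1 + Real.cos θ₀)⁻¹ • (ν k + ν (k - 1)))
    (hT : ∀ k, T k = -Rot (N k))
    (ψ η : ZMod n → ℝ) (v : ZMod n → E2)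
    (hv : ∀ k, v k = ψ k • N k + η k • T k) :
    ∀ k : ZMod n,
      ‖v (k + 1) - v k‖ ^ 2 - ⟪v (k + 1) - v k, Rot (ν k)⟫ ^ 2 =
        ((ψ (k + 1) - ψ k) + Real.tan (θ₀ / 2) * (η (k + 1) + η k)) ^ 2 := by
  intro k
  set c := Real.cos θ₀ with hcdef
  set s := Real.sin θ₀ with hsdef
  set t := Real.tan (θ₀ / 2) with htdef
  have hcs : c ^ 2 + s ^ 2 = 1 := by
    rw [hcdef, hsdef]; exact Real.cos_sq_add_sin_sq θ₀
  have hcoshalf : 0 < Real.cos (θ₀ / 2) := by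
    apply Real.cos_pos_of_mem_Ioo
    constructor
    · linarith [hθ₀range.1]
    · linarith [hθ₀range.2, Real.pi_pos]
  have hhalf : 1 + c = 2 * Real.cos (θ₀ / 2) ^ 2 := by
    have h := Real.cos_sq (θ₀ / 2)
    rw [show 2 * (θ₀ / 2) = θ₀ by ring] at h
    rw [hcdef]; linarith
  have hc : (0:ℝ) < 1 + c := by rw [hhalf]; positivity
  have ht : t * (1 + c) = s := by
    have hs2 : s = 2 * Real.sin (θ₀ / 2) * Real.cos (θ₀ / 2) := by
      rw [hsdef]
      have h2 : θ₀ = 2 * (θ₀ / 2) := by ring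
      rw [h2, Real.sin_two_mul]; ring_nf
    rw [htdef, Real.tan_eq_sin_div_cos, hhalf, hs2]
    field_simp
  -- unit vectors
  have hunit : ∀ j : ZMod n, ν j 0 ^ 2 + ν j 1 ^ 2 = 1 := by
    intro j
    have hd : p (j + 1) - p j ≠ 0 := sub_ne_zero.mpr (hreg j)
    have hu := norm_sq_eq' (‖p (j + 1) - p j‖⁻¹ • (p (j + 1) - p j))
    rw [show ‖‖p (j + 1) - p j‖⁻¹ • (p (j + 1) - p j)‖ = 1 by
      rw [norm_smul, norm_inv, norm_norm, inv_mul_cancel₀ (norm_ne_zero_iff.mpr hd)]] at hu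
    have h1 : ‖ν j‖ ^ 2 = 1 := by
      rw [hν j, norm_sq_eq', Rot_apply0, Rot_apply1]
      nlinarith [hu]
    rw [← norm_sq_eq'] at *
    exact h1
  have hab : ν k 0 ^ 2 + ν k 1 ^ 2 = 1 := hunit k
  -- relations for ν (k-1)
  have h0 := congrArg (fun w : E2 => w 0) (hθ k)
  have h1 := congrArg (fun w : E2 => w 1) (hθ k)
  simp only [RotBy_apply0, RotBy_apply1, ← hcdef, ← hsdef] at h0 h1
  have hx2 : ν (k - 1) 0 = c * ν k 0 + s * ν k 1 := by
    linear_combination c * h0 + s * h1 - ν (k - 1) 0 * hcs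
  have hy2 : ν (k - 1) 1 = c * ν k 1 - s * ν k 0 := by
    linear_combination (-s) * h0 + c * h1 - ν (k - 1) 1 * hcs
  -- relations for ν (k+1)
  have hk1 : RotBy θ₀ (ν k) = ν (k + 1) := by
    have h := hθ (k + 1); rwa [add_sub_cancel_right] at h
  have hp0 : ν (k + 1) 0 = c * ν k 0 - s * ν k 1 := by
    rw [← hk1, RotBy_apply0]
  have hp1 : ν (k + 1) 1 = s * ν k 0 + c * ν k 1 := by
    rw [← hk1, RotBy_apply1]
  -- entry formulas
  have hN0 : ∀ j : ZMod n, N j 0 = (1 + c)⁻¹ * (ν j 0 + ν (j - 1) 0) := by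
    intro j; rw [hN j]; simp [← hcdef]; ring
  have hN1 : ∀ j : ZMod n, N j 1 = (1 + c)⁻¹ * (ν j 1 + ν (j - 1) 1) := by
    intro j; rw [hN j]; simp [← hcdef]; ring
  have hT0 : ∀ j : ZMod n, T j 0 = N j 1 := by
    intro j; rw [hT j]; simp [Rot_apply0]
  have hT1 : ∀ j : ZMod n, T j 1 = -(N j 0) := by
    intro j; rw [hT j]; simp [Rot_apply1]
  have hw0 : (v (k + 1) - v k) 0 =
      ψ (k + 1) * N (k + 1) 0 + η (k + 1) * T (k + 1) 0
        - (ψ k * N k 0 + η k * T k 0) := by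
    rw [hv (k + 1), hv k]; simp
  have hw1 : (v (k + 1) - v k) 1 =
      ψ (k + 1) * N (k + 1) 1 + η (k + 1) * T (k + 1) 1
        - (ψ k * N k 1 + η k * T k 1) := by
    rw [hv (k + 1), hv k]; simp
  have key : ⟪v (k + 1) - v k, ν k⟫ =
      (ψ (k + 1) - ψ k) + t * (η (k + 1) + η k) := by
    rw [inner_eq', hw0, hw1, hT0 (k + 1), hT1 (k + 1), hT0 k, hT1 k,
      hN0 (k + 1), hN1 (k + 1), hN0 k, hN1 k, add_sub_cancel_right,
      hp0, hp1, hx2, hy2]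
    field_simp
    linear_combination ((1 + c) * (ψ (k + 1) - ψ k) + s * (η (k + 1) + η k)) * hab
      - (η (k + 1) + η k) * ht
  have key2 : ‖v (k + 1) - v k‖ ^ 2 =
      ⟪v (k + 1) - v k, ν k⟫ ^ 2 + ⟪v (k + 1) - v k, Rot (ν k)⟫ ^ 2 := by
    rw [norm_sq_eq', inner_eq', inner_eq', Rot_apply0, Rot_apply1]
    linear_combination (-((v (k + 1) - v k) 0 ^ 2 + (v (k + 1) - v k) 1 ^ 2)) * hab
  rw [key2, key]
  ring
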